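/- Let H ⊂ V' with V a Hilbert space, suppose B : V × V → V' is bilinear, antisymmetric (⟨B(v₁,v₂),v₃⟩ = −⟨B(v₁,v₃),v₂⟩), and satisfies |⟨B(v₁,v₂),v₃⟩| ≤ C₀ ‖v₁‖ ‖v₂‖ |v₃|^{1/2} ‖v₃‖^{1/2} for all v₁,v₂,v₃ ∈ V (‖·‖ the V-norm, |·| the H-norm). Then for any u, v ∈ V and any ε > 0, |⟨B(u,u) − B(v,v), u − v⟩| ≤ ε ‖u − v‖² + (C₀⁴ / (ε³)) · c ‖u‖⁴ |u − v|² for some absolute constant c. -/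

import Mathlib

/-- Key uniqueness estimate: under antisymmetry and the interpolation bound
`|⟨B(v₁,v₂),v₃⟩| ≤ C₀‖v₁‖‖v₂‖|v₃|^{1/2}‖v₃‖^{1/2}`, for all `u, v` and `ε > 0`,
`|⟨B(u,u) - B(v,v), u-v⟩| ≤ ε‖u-v‖² + (C₀⁴/ε³)·c·‖u‖⁴|u-v|²`. -/
theorem stmt7 {V : Type*} [NormedAddCommGroup V] [InnerProductSpace ℝ V]
    (N : V → ℝ) (hN : ∀ x, 0 ≤ N x)
    (B : V →L[ℝ] V →L[ℝ] StrongDual ℝ V)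
    (hanti : ∀ v₁ v₂ v₃ : V, B v₁ v₂ v₃ = - B v₁ v₃ v₂)
    (C₀ : ℝ) (hC₀ : 0 ≤ C₀)
    (hB : ∀ v₁ v₂ v₃ : V, |B v₁ v₂ v₃| ≤
      C₀ * ‖v₁‖ * ‖v₂‖ * (N v₃) ^ ((1 : ℝ) / 2) * ‖v₃‖ ^ ((1 : ℝ) / 2)) :
    ∃ c > (0 : ℝ), ∀ (u v : V) (ε : ℝ), 0 < ε →
      |B u u (u - v) - B v v (u - v)| ≤
        ε * ‖u - v‖ ^ 2 + (C₀ ^ 4 / ε ^ 3) * c * ‖u‖ ^ 4 * (N (u - v)) ^ 2 := by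
  refine ⟨27 / 256, by norm_num, fun u v ε hε => ?_⟩
  set w := u - v with hw
  -- Step 1: B u u w - B v v w = B w u w
  have hzero : B v w w = 0 := by
    have := hanti v w w
    linarith
  have hdiff : B u u w - B v v w = B w u w := by
    have h1 : B w u w = B u u w - B v u w := by
      rw [hw]; simp [map_sub]; ring
    have h2 : B v w w = B v u w - B v v w := by
      rw [hw]; simp [map_sub]; ring
    rw [hzero] at h2
    linarith
  rw [hdiff]
  -- Step 2: interpolation bound
  have hb := hB w u w
  set n := (N w) ^ ((1 : ℝ) / 2) with hn
  set m := ‖w‖ ^ ((1 : ℝ) / 2) with hm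
  have hn0 : 0 ≤ n := Real.rpow_nonneg (hN w) _
  have hm0 : 0 ≤ m := Real.rpow_nonneg (norm_nonneg w) _
  have hn2 : n ^ 2 = N w := by
    rw [hn, ← Real.rpow_natCast (_ ^ _) 2, ← Real.rpow_mul (hN w)]
    norm_num
  have hm2 : m ^ 2 = ‖w‖ := by
    rw [hm, ← Real.rpow_natCast (_ ^ _) 2, ← Real.rpow_mul (norm_nonneg w)]
    norm_num
  have hu0 : 0 ≤ ‖u‖ := norm_nonneg u
  -- |B w u w| ≤ C₀ * ‖u‖ * n * m^3
  have key : |B w u w| ≤ C₀ * ‖u‖ * n * m ^ 3 := by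
    calc |B w u w| ≤ C₀ * ‖w‖ * ‖u‖ * n * m := hb
      _ = C₀ * ‖u‖ * n * m ^ 3 := by rw [← hm2]; ring
  refine key.trans ?_
  rw [← hm2, ← hn2]
  -- Young: A x³ ≤ ε x⁴ + (27/256) A⁴ / ε³, with A = C₀‖u‖n, x = m (scaled)
  have hA0 : 0 ≤ C₀ * ‖u‖ * n := by positivity
  set A := C₀ * ‖u‖ * n with hA
  have hx := mul_nonneg (sq_nonneg (4 * (ε * m) - 3 * A))
    (by nlinarith [sq_nonneg (ε * m), sq_nonneg A, mul_nonneg hA0 (mul_nonneg hε.le hm0)] :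
      (0:ℝ) ≤ 16 * (ε * m) ^ 2 + 8 * A * (ε * m) + 3 * A ^ 2)
  have hε3 : 0 < ε ^ 3 := by positivity
  rw [← mul_le_mul_iff_of_pos_right hε3]
  have hyoung : A * m ^ 3 * ε ^ 3 ≤ ε ^ 4 * m ^ 4 + 27 / 256 * A ^ 4 := by nlinarith [hx]
  refine hyoung.trans_eq ?_
  rw [hA]; field_simp
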